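/- Let A be a unital C*-algebra admitting no characters. Then there exist finitely many unitaries u₁, u₂, …, uₙ in A such that every state ρ on A satisfies |ρ(uⱼ)| < 1 for some j ∈ {1, …, n}. -/

import Mathlib

open scoped ComplexOrder

section StateAux
variable {A : Type*} [CStarAlgebra A] [PartialOrder A] [StarOrderedRing A] {ρ : A →ₗ[ℂ] ℂ}

lemma st_map_real (r : ℝ) (h1 : ρ 1 = 1) : ρ (algebraMap ℝ A r) = r := by
  rw [Algebra.algebraMap_eq_smul_one, ← IsScalarTower.algebraMap_smul ℂ r (1 : A),
    map_smul, h1]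
  simp

lemma st_nonneg (hpos : ∀ a : A, 0 ≤ ρ (star a * a)) {x : A} (hx : 0 ≤ x) : 0 ≤ ρ x := by
  have h := hpos (CFC.sqrt x)
  rwa [(IsSelfAdjoint.of_nonneg (CFC.sqrt_nonneg x)).star_eq, CFC.sqrt_mul_sqrt_self x hx] at h

lemma st_sa (h1 : ρ 1 = 1) (hpos : ∀ a : A, 0 ≤ ρ (star a * a)) {a : A}
    (ha : IsSelfAdjoint a) : ρ a = ((ρ a).re : ℂ) ∧ |(ρ a).re| ≤ ‖a‖ := by
  have hub : 0 ≤ ρ (algebraMap ℝ A ‖a‖ - a) :=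
    st_nonneg hpos (sub_nonneg.2 ha.le_algebraMap_norm_self)
  have hlb : 0 ≤ ρ (a + algebraMap ℝ A ‖a‖) := by
    refine st_nonneg hpos ?_
    have := ha.neg_algebraMap_norm_le_self
    rwa [neg_le_iff_add_nonneg] at this
  rw [map_sub, st_map_real _ h1, Complex.nonneg_iff] at hub
  rw [map_add, st_map_real _ h1, Complex.nonneg_iff] at hlb
  simp only [Complex.sub_re, Complex.sub_im, Complex.ofReal_re, Complex.ofReal_im] at hub
  simp only [Complex.add_re, Complex.add_im, Complex.ofReal_re, Complex.ofReal_im,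
    add_zero] at hlb
  constructor
  · apply Complex.ext
    · simp
    · simp only [Complex.ofReal_im]; linarith [hub.2]
  · rw [abs_le]; constructor <;> [linarith [hlb.1]; linarith [hub.1]]

lemma st_star (h1 : ρ 1 = 1) (hpos : ∀ a : A, 0 ≤ ρ (star a * a)) (a : A) :
    ρ (star a) = starRingEnd ℂ (ρ a) := by
  have hsa : ∀ {b : A}, IsSelfAdjoint b → ρ b = ((ρ b).re : ℂ) :=
    fun hb => (st_sa h1 hpos hb).1
  have hd := realPart_add_I_smul_imaginaryPart a
  have hds : star a = (realPart a : A) - Complex.I • (imaginaryPart a : A) := by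
    conv_lhs => rw [← hd]
    rw [star_add, star_smul]
    simp [(realPart a).2.star_eq, (imaginaryPart a).2.star_eq, Complex.conj_I, neg_smul,
      sub_eq_add_neg]
  have h1' : ρ (realPart a : A) = ((ρ (realPart a : A)).re : ℂ) := hsa (realPart a).2
  have h2' : ρ (imaginaryPart a : A) = ((ρ (imaginaryPart a : A)).re : ℂ) := hsa (imaginaryPart a).2
  rw [hds]
  conv_rhs => rw [← hd]
  rw [map_sub, map_smul, map_add, map_smul, h1', h2']
  simp only [smul_eq_mul, map_add, map_mul, Complex.conj_I, Complex.conj_ofReal]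
  ring

lemma st_expand' (x y : A) (s : ℂ) :
    ρ (star (s • y + x) * (s • y + x)) =
      (starRingEnd ℂ s * s) * ρ (star y * y) + starRingEnd ℂ s * ρ (star y * x)
        + s * ρ (star x * y) + ρ (star x * x) := by
  rw [star_add, star_smul, add_mul, mul_add, mul_add]
  simp only [smul_mul_assoc, mul_smul_comm, map_add, map_smul, smul_smul, smul_eq_mul,
    RCLike.star_def]
  ring

lemma st_cs_bound (h1 : ρ 1 = 1) (hpos : ∀ a : A, 0 ≤ ρ (star a * a)) (x : A) :
    ‖ρ x‖ ^ 2 ≤ (ρ (star x * x)).re := by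
  have h0 := hpos ((-(ρ x)) • 1 + x)
  rw [st_expand'] at h0
  simp only [star_one, one_mul, mul_one, h1, st_star h1 hpos x] at h0
  rw [Complex.nonneg_iff] at h0
  have hre := h0.1
  simp only [Complex.add_re, Complex.mul_re, Complex.conj_re, Complex.conj_im, Complex.neg_re,
    Complex.neg_im] at hre
  have hn : ‖ρ x‖ ^ 2 = (ρ x).re ^ 2 + (ρ x).im ^ 2 := by
    rw [Complex.sq_norm, Complex.normSq_apply]; ring
  nlinarith [hre]

lemma st_bound (h1 : ρ 1 = 1) (hpos : ∀ a : A, 0 ≤ ρ (star a * a)) (x : A) :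
    ‖ρ x‖ ≤ ‖x‖ := by
  have h0 := st_cs_bound h1 hpos x
  have h2 := (st_sa h1 hpos (IsSelfAdjoint.star_mul_self x)).2
  have h3 : ‖star x * x‖ = ‖x‖ * ‖x‖ := CStarRing.norm_star_mul_self
  rw [h3] at h2
  rw [abs_le] at h2
  nlinarith [norm_nonneg (ρ x), norm_nonneg x]

lemma st_cs_zero (h1 : ρ 1 = 1) (hpos : ∀ a : A, 0 ≤ ρ (star a * a)) {x : A}
    (hx : ρ (star x * x) = 0) (b : A) : ρ (b * x) = 0 := by
  have hsa : ∀ {c : A}, IsSelfAdjoint c → ρ c = ((ρ c).re : ℂ) :=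
    fun hc => (st_sa h1 hpos hc).1
  have hstar := st_star h1 hpos
  set B := ρ (b * x) with hB
  set P := (ρ (b * star b)).re with hP
  have hPpos : (0:ℝ) ≤ P := by
    have := hpos (star b)
    rw [star_star, Complex.nonneg_iff] at this
    exact this.1
  set t : ℝ := 1 / (P + 1) with ht
  have htpos : 0 < t := by positivity
  have h0 := hpos ((-(t:ℂ) * B) • star b + x)
  rw [st_expand'] at h0
  have e1 : star (star b) * star b = b * star b := by rw [star_star]
  have e2 : star (star b) * x = b * x := by rw [star_star]
  have e3 : ρ (star x * star b) = starRingEnd ℂ B := by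
    rw [hB, ← hstar (b * x), star_mul]
  have e4 : ρ (b * star b) = (P : ℂ) := hsa (IsSelfAdjoint.mul_star_self b)
  rw [e1, e2, e3, e4, hx, ← hB] at h0
  rw [Complex.nonneg_iff] at h0
  have hre := h0.1
  have key : 0 ≤ t^2 * Complex.normSq B * P - 2 * t * Complex.normSq B := by
    have : ((starRingEnd ℂ) (-(t:ℂ) * B) * (-(t:ℂ) * B) * (P:ℂ)
        + (starRingEnd ℂ) (-(t:ℂ) * B) * B + (-(t:ℂ) * B) * (starRingEnd ℂ B) + 0)
        = ((t^2 * Complex.normSq B * P - 2 * t * Complex.normSq B : ℝ) : ℂ) := by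
      simp only [Complex.ext_iff, Complex.mul_re, Complex.mul_im, Complex.conj_re,
        Complex.conj_im, Complex.ofReal_re, Complex.ofReal_im, Complex.neg_re, Complex.neg_im,
        Complex.add_re, Complex.add_im, Complex.sub_re, Complex.sub_im, Complex.zero_re,
        Complex.zero_im, Complex.normSq_apply, map_mul, map_neg, Complex.conj_ofReal]
      constructor <;> ring
    rw [this] at hre
    rwa [Complex.ofReal_re] at hre
  have h5 : t * P = 1 - t := by rw [ht]; field_simp; ring
  have hns : Complex.normSq B = 0 := by
    nlinarith [Complex.normSq_nonneg B, htpos, mul_nonneg htpos.le (Complex.normSq_nonneg B),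
      mul_pos htpos htpos]
  exact Complex.normSq_eq_zero.mp hns

lemma st_unitary_mul (h1 : ρ 1 = 1) (hpos : ∀ a : A, 0 ≤ ρ (star a * a))
    {u : A} (hu : u ∈ unitary A) (hnorm : 1 ≤ ‖ρ u‖) (b : A) :
    ρ (b * u) = ρ b * ρ u := by
  have huu : star u * u = 1 := (Unitary.mem_iff.mp hu).1
  set c := ρ u with hc
  have hcle : ‖c‖ ^ 2 ≤ 1 := by
    have := st_cs_bound h1 hpos u
    rwa [huu, h1, Complex.one_re] at this
  have hcn : Complex.normSq c = 1 := by
    have h2 : ‖c‖ ^ 2 = Complex.normSq c := by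
      rw [Complex.sq_norm]
    nlinarith [hnorm, norm_nonneg c]
  have hz : ρ (star ((-c) • 1 + u) * ((-c) • 1 + u)) = 0 := by
    rw [st_expand']
    simp only [star_one, one_mul, mul_one, h1, huu, st_star h1 hpos u]
    rw [map_neg, ← hc]
    have : (starRingEnd ℂ) c * c = (Complex.normSq c : ℂ) := by
      rw [mul_comm]; exact Complex.mul_conj c
    rw [hcn] at this
    simp only [neg_mul, mul_neg, this]
    have : c * (starRingEnd ℂ) c = (Complex.normSq c : ℂ) := Complex.mul_conj c
    rw [hcn] at this
    rw [this]
    simp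
  have h6 := st_cs_zero h1 hpos hz b
  have h7 : b * ((-c) • 1 + u) = (-c) • b + b * u := by
    rw [mul_add, mul_smul_comm, mul_one]
  rw [h7, map_add, map_smul] at h6
  have := h6
  rw [smul_eq_mul] at this
  linear_combination this

end StateAux

section Span
variable {A : Type*} [CStarAlgebra A]

lemma sa_mem_span_unitary [Nontrivial A] (h : A) (hh : IsSelfAdjoint h) (hn : ‖h‖ ≤ 1) :
    h ∈ Submodule.span ℂ (unitary A : Set A) := by
  set s : A := cfc (fun t : ℝ => Real.sqrt (1 - t^2)) h with hs
  have hssa : IsSelfAdjoint s := cfc_predicate _ h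
  have hcomm : h * s = s * h := by
    conv_lhs => rw [← cfc_id' ℝ h, hs, ← cfc_mul _ _ h]
    conv_rhs => rw [← cfc_id' ℝ h, hs, ← cfc_mul _ _ h]
    exact cfc_congr fun x _ => mul_comm _ _
  have hspec : ∀ x ∈ spectrum ℝ h, x^2 ≤ 1 := by
    intro x hx
    have := spectrum.norm_le_norm_of_mem hx
    have hx1 : |x| ≤ 1 := le_trans (by simpa using this) hn
    nlinarith [abs_nonneg x, _root_.sq_abs x]
  have hss : s * s = 1 - h * h := by
    rw [hs, ← cfc_mul _ _ h]
    have h2 : h * h = cfc (fun t : ℝ => t * t) h := by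
      conv_lhs => rw [← cfc_id' ℝ h, ← cfc_mul _ _ h]
    rw [h2, ← cfc_one ℝ h, ← cfc_sub ..]
    apply cfc_congr
    intro x hx
    have h3 : (0:ℝ) ≤ 1 - x^2 := by linarith [hspec x hx]
    simp only [Pi.one_apply]
    rw [Real.mul_self_sqrt h3]
    ring
  set u : A := h + Complex.I • s with hu
  have hstaru : star u = h - Complex.I • s := by
    rw [hu, star_add, hh.star_eq, star_smul, hssa.star_eq, Complex.star_def, Complex.conj_I,
      neg_smul, sub_eq_add_neg]
  have hmem : u ∈ unitary A := by
    have expand : ∀ (c : ℂ), (h - c • s) * (h + c • s)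
        = h * h - (c * c) • (s * s) + c • (h * s) - c • (s * h) := by
      intro c
      simp only [mul_add, sub_mul, smul_mul_assoc, mul_smul_comm, smul_smul, smul_add, smul_sub]
      abel
    rw [Unitary.mem_iff]
    constructor
    · rw [hstaru, hu, expand, hcomm, hss, Complex.I_mul_I]
      module
    · have expand2 : (h + Complex.I • s) * (h - Complex.I • s)
          = h * h - (Complex.I * Complex.I) • (s * s) - Complex.I • (h * s)
            + Complex.I • (s * h) := by
        simp only [mul_sub, add_mul, smul_mul_assoc, mul_smul_comm, smul_smul, smul_add, smul_sub]
        abel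
      rw [hstaru, hu, expand2, hcomm, hss, Complex.I_mul_I]
      module
  have hmem' : star u ∈ unitary A := Unitary.star_mem hmem
  have hrepr : h = ((1:ℂ)/2) • u + ((1:ℂ)/2) • star u := by
    rw [hstaru, hu]
    module
  rw [hrepr]
  exact Submodule.add_mem _ (Submodule.smul_mem _ _ (Submodule.subset_span hmem))
    (Submodule.smul_mem _ _ (Submodule.subset_span hmem'))

lemma mem_span_unitary (x : A) : x ∈ Submodule.span ℂ (unitary A : Set A) := by
  rcases subsingleton_or_nontrivial A with hA | hA
  · simpa [Subsingleton.elim x 0] using Submodule.zero_mem _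
  have key : ∀ h : A, IsSelfAdjoint h → h ∈ Submodule.span ℂ (unitary A : Set A) := by
    intro h hh
    set r : ℝ := ‖h‖ + 1 with hr
    have hrpos : (0:ℝ) < r := by positivity
    have hc : h = (r : ℂ) • (((r⁻¹ : ℝ) : ℂ) • h) := by
      rw [smul_smul]
      norm_cast
      rw [mul_inv_cancel₀ hrpos.ne']
      simp
    rw [hc]
    refine Submodule.smul_mem _ _
      (sa_mem_span_unitary _ (IsSelfAdjoint.smul (Complex.conj_ofReal _) hh) ?_)
    rw [norm_smul]
    simp only [Complex.norm_real, Real.norm_eq_abs, abs_inv, abs_of_pos hrpos]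
    rw [inv_mul_le_iff₀ hrpos, mul_one, hr]
    linarith
  have hd := realPart_add_I_smul_imaginaryPart x
  rw [← hd]
  exact Submodule.add_mem _ (key _ (realPart x).2)
    (Submodule.smul_mem _ _ (key _ (imaginaryPart x).2))

end Span

section Character
variable {A : Type*} [CStarAlgebra A] [PartialOrder A] [StarOrderedRing A]

/-- A state whose values on every unitary have norm at least one is a character. -/
lemma st_character {ρ : A →ₗ[ℂ] ℂ} (h1 : ρ 1 = 1) (hpos : ∀ a : A, 0 ≤ ρ (star a * a))
    (hunit : ∀ u : A, u ∈ unitary A → 1 ≤ ‖ρ u‖) : Nonempty (A →ₐ[ℂ] ℂ) := by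
  have hmul : ∀ x y : A, ρ (x * y) = ρ x * ρ y := by
    intro x y
    have hy := mem_span_unitary y
    induction hy using Submodule.span_induction with
    | mem u hu => exact st_unitary_mul h1 hpos hu (hunit u hu) x
    | zero => simp
    | add a b _ _ ha hb => rw [mul_add, map_add, map_add, mul_add, ha, hb]
    | smul c a _ ha => rw [mul_smul_comm, map_smul, map_smul, ha, smul_eq_mul, smul_eq_mul]; ring
  exact ⟨AlgHom.ofLinearMap ρ h1 hmul⟩

end Character

/-- Let `A` be a unital C*-algebra admitting no characters (a character
being a unital algebra homomorphism `A → ℂ`).  Then there exist finitely many unitaries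
`u₁, …, uₙ` in `A` such that every state `ρ` on `A` (linear with `ρ 1 = 1` and
`ρ (a* a) ≥ 0` for all `a`) satisfies `|ρ(uⱼ)| < 1` for some `j`. -/
theorem exists_unitaries_separating_states (A : Type*) [CStarAlgebra A]
    (h : IsEmpty (A →ₐ[ℂ] ℂ)) :
    ∃ (n : ℕ) (u : Fin n → unitary A), 1 ≤ n ∧
      ∀ ρ : A →ₗ[ℂ] ℂ, ρ 1 = 1 → (∀ a : A, 0 ≤ ρ (star a * a)) →
        ∃ j : Fin n, ‖ρ (u j)‖ < 1 := by
  letI : PartialOrder A := CStarAlgebra.spectralOrder A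
  haveI : StarOrderedRing A := CStarAlgebra.spectralOrderedRing A
  -- the state space inside the weak dual
  set S : Set (WeakDual ℂ A) :=
    {φ : WeakDual ℂ A | φ 1 = 1 ∧ ∀ a : A, 0 ≤ φ (star a * a)} ∩
      (WeakDual.toStrongDual ⁻¹' Metric.closedBall 0 1) with hS
  have hTclosed : IsClosed {φ : WeakDual ℂ A | φ 1 = 1 ∧ ∀ a : A, 0 ≤ φ (star a * a)} := by
    have hcl : IsClosed {z : ℂ | 0 ≤ z} := by
      have : {z : ℂ | 0 ≤ z} = Complex.re ⁻¹' Set.Ici 0 ∩ Complex.im ⁻¹' {0} := by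
        ext z
        rw [Set.mem_setOf_eq, Complex.nonneg_iff]
        simp [eq_comm]
      rw [this]
      exact (isClosed_Ici.preimage Complex.continuous_re).inter
        (isClosed_singleton.preimage Complex.continuous_im)
    have : {φ : WeakDual ℂ A | φ 1 = 1 ∧ ∀ a : A, 0 ≤ φ (star a * a)} =
        {φ : WeakDual ℂ A | φ 1 = 1} ∩ ⋂ a : A, {φ : WeakDual ℂ A | 0 ≤ φ (star a * a)} := by
      ext φ
      simp [Set.mem_iInter]
    rw [this]
    refine (isClosed_eq (WeakDual.eval_continuous (1 : A)) continuous_const).inter ?_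
    exact isClosed_iInter fun a => hcl.preimage (WeakDual.eval_continuous _)
  have hScompact : IsCompact S :=
    (WeakDual.isCompact_closedBall (𝕜 := ℂ) (E := A) 0 1).inter_left hTclosed
  set C : unitary A → Set (WeakDual ℂ A) := fun u => {φ | 1 ≤ ‖φ (u : A)‖} with hC
  have hCclosed : ∀ u, IsClosed (C u) := fun u =>
    isClosed_le continuous_const ((WeakDual.eval_continuous (u : A)).norm)
  have hempty : S ∩ ⋂ u : unitary A, C u = ∅ := by
    rw [Set.eq_empty_iff_forall_notMem]
    rintro φ ⟨⟨⟨hφ1, hφpos⟩, hball⟩, hφC⟩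
    rw [Set.mem_iInter] at hφC
    set ρ₀ : A →ₗ[ℂ] ℂ := (WeakDual.toStrongDual φ).toLinearMap with hρ₀
    have happ : ∀ a : A, ρ₀ a = φ a := fun a => rfl
    have h1 : ρ₀ 1 = 1 := hφ1
    have hpos : ∀ a : A, 0 ≤ ρ₀ (star a * a) := hφpos
    have hunit : ∀ u : A, u ∈ unitary A → 1 ≤ ‖ρ₀ u‖ := by
      intro u hu
      exact hφC ⟨u, hu⟩
    exact h.false (st_character h1 hpos hunit).some
  obtain ⟨t, ht⟩ := hScompact.elim_finite_subfamily_closed C hCclosed hempty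
  refine ⟨((1 : unitary A) :: t.toList).length, fun j => ((1 : unitary A) :: t.toList).get j,
    by simp, ?_⟩
  intro ρ h1 hpos
  have hb : ∀ a : A, ‖ρ a‖ ≤ 1 * ‖a‖ := fun a => by
    rw [one_mul]; exact st_bound h1 hpos a
  set φc : A →L[ℂ] ℂ := ρ.mkContinuous 1 hb with hφc
  set φ : WeakDual ℂ A := StrongDual.toWeakDual φc with hφ
  have happ : ∀ a : A, φ a = ρ a := fun a => rfl
  have hφS : φ ∈ S := by
    refine ⟨⟨by rw [happ]; exact h1, fun a => by rw [happ]; exact hpos a⟩, ?_⟩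
    simp only [Set.mem_preimage, Metric.mem_closedBall]
    rw [dist_zero_right]
    exact ρ.mkContinuous_norm_le zero_le_one hb
  have hφnot : φ ∉ ⋂ u ∈ t, C u := by
    intro hmem
    exact absurd (ht ▸ Set.mem_inter hφS hmem) (Set.notMem_empty φ)
  rw [Set.mem_iInter₂] at hφnot
  push_neg at hφnot
  obtain ⟨v, hvt, hv⟩ := hφnot
  rw [hC, Set.mem_setOf_eq, not_le] at hv
  have hvmem : v ∈ (1 : unitary A) :: t.toList := List.mem_cons_of_mem _ (Finset.mem_toList.2 hvt)
  obtain ⟨j, hj⟩ := List.mem_iff_get.mp hvmem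
  refine ⟨j, ?_⟩
  simp only [hj]
  rw [← happ]
  exact hv
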